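/- For each X ∈ q(n), the super Casimir element Ω = Σ_{i,j∈I⁺} e_{ij} ⊗ ē_{ji} - Σ_{i,j∈I⁺} f_{ij} ⊗ f̄_{ji} ∈ q(n) ⊗ End(V) satisfies [1 ⊗ X + X ⊗ 1, Ω] = 0, where the bracket is the super commutator and tensor multiplication obeys the sign rule. -/

import Mathlib

open Matrix

/-- Index set of the standard basis of `V = ℂ^{n|n}`: `Sum.inl k` is the even
index `k ∈ I⁺`, `Sum.inr k` is the odd index `-k`. -/
abbrev SIdx (n : ℕ) := Fin n ⊕ Fin n

/-- Parity exponent of a basis index. -/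
def par {n : ℕ} : SIdx n → ℕ
  | Sum.inl _ => 0
  | Sum.inr _ => 1

/-- Matrix units `E_{ij}`. -/
noncomputable def Estd (n : ℕ) (i j : SIdx n) : Matrix (SIdx n) (SIdx n) ℂ :=
  Matrix.single i j 1

/-- `e_{ij} = E_{ij} + E_{-i,-j}` (even basis elements of `q(n)`). -/
noncomputable def eQ (n : ℕ) (i j : Fin n) : Matrix (SIdx n) (SIdx n) ℂ :=
  Estd n (Sum.inl i) (Sum.inl j) + Estd n (Sum.inr i) (Sum.inr j)

/-- `f_{ij} = E_{-i,j} + E_{i,-j}` (odd basis elements of `q(n)`). -/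
noncomputable def fQ (n : ℕ) (i j : Fin n) : Matrix (SIdx n) (SIdx n) ℂ :=
  Estd n (Sum.inr i) (Sum.inl j) + Estd n (Sum.inl i) (Sum.inr j)

/-- `ē_{ij} = E_{ij} - E_{-i,-j}`. -/
noncomputable def ebar (n : ℕ) (i j : Fin n) : Matrix (SIdx n) (SIdx n) ℂ :=
  Estd n (Sum.inl i) (Sum.inl j) - Estd n (Sum.inr i) (Sum.inr j)

/-- `f̄_{ij} = E_{-i,j} - E_{i,-j}`. -/
noncomputable def fbar (n : ℕ) (i j : Fin n) : Matrix (SIdx n) (SIdx n) ℂ :=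
  Estd n (Sum.inr i) (Sum.inl j) - Estd n (Sum.inl i) (Sum.inr j)

/-- Action of the pure tensor `A ⊗ B` (with `B` of parity `pB`) on `V ⊗ V`
(realized as functions `I × I → ℂ`) via the super sign rule
`(A ⊗ B)(v ⊗ w) = (-1)^{p(B) p(v)} A v ⊗ B w`.  Composition of these operators
realizes the Koszul-signed multiplication of `End(V) ⊗ End(V)`. -/
noncomputable def rho {n : ℕ} (A B : Matrix (SIdx n) (SIdx n) ℂ) (pB : ℕ)
    (f : SIdx n × SIdx n → ℂ) : SIdx n × SIdx n → ℂ :=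
  fun pq => ∑ k : SIdx n, ∑ l : SIdx n,
    ((-1 : ℂ)) ^ (pB * par k) * A pq.1 k * B pq.2 l * f (k, l)

/-- The super Casimir `Ω = Σ_{i,j} e_{ij} ⊗ ē_{ji} - Σ_{i,j} f_{ij} ⊗ f̄_{ji}`, acting
on `V ⊗ V` via the super sign rule. -/
noncomputable def OmegaOp (n : ℕ) (f : SIdx n × SIdx n → ℂ) : SIdx n × SIdx n → ℂ :=
  (∑ i : Fin n, ∑ j : Fin n, rho (eQ n i j) (ebar n j i) 0 f) -
    (∑ i : Fin n, ∑ j : Fin n, rho (fQ n i j) (fbar n j i) 1 f)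

/-- `1 ⊗ X + X ⊗ 1` for the even element `X = e_{ab}` of `q(n)`. -/
noncomputable def DeltaE (n : ℕ) (a b : Fin n) (f : SIdx n × SIdx n → ℂ) :
    SIdx n × SIdx n → ℂ :=
  rho (eQ n a b) 1 0 f + rho 1 (eQ n a b) 0 f

/-- `1 ⊗ X + X ⊗ 1` for the odd element `X = f_{ab}` of `q(n)`. -/
noncomputable def DeltaF (n : ℕ) (a b : Fin n) (f : SIdx n × SIdx n → ℂ) :
    SIdx n × SIdx n → ℂ :=
  rho (fQ n a b) 1 0 f + rho 1 (fQ n a b) 1 f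

/-- For every `X ∈ q(n)` (it suffices to take the basis elements `e_{ab}`, `f_{ab}`),
the super Casimir satisfies `[1 ⊗ X + X ⊗ 1, Ω] = 0`.  Since `Ω` is even the super
commutator is the ordinary commutator of the corresponding operators on `V ⊗ V`. -/

noncomputable def Sop (n : ℕ) (f : SIdx n × SIdx n → ℂ) : SIdx n × SIdx n → ℂ
  | (Sum.inl p, Sum.inl q) => f (Sum.inl q, Sum.inl p) - f (Sum.inr q, Sum.inr p)
  | (Sum.inl p, Sum.inr q) => f (Sum.inr q, Sum.inl p) - f (Sum.inl q, Sum.inr p)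
  | (Sum.inr p, Sum.inl q) => f (Sum.inl q, Sum.inr p) + f (Sum.inr q, Sum.inl p)
  | (Sum.inr p, Sum.inr q) => -f (Sum.inl q, Sum.inl p) - f (Sum.inr q, Sum.inr p)

set_option maxHeartbeats 1000000 in
theorem omega_eq (n : ℕ) (f : SIdx n × SIdx n → ℂ) : OmegaOp n f = Sop n f := by
  funext pq
  obtain ⟨p, q⟩ := pq
  cases p <;> cases q <;>
    simp [OmegaOp, Sop, rho, eQ, fQ, ebar, fbar, Estd, Matrix.single, Matrix.of_apply,
      ite_and, Fintype.sum_sum_type, par, mul_ite, ite_mul, Finset.sum_ite_eq, Finset.sum_ite_eq',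
      Finset.sum_sub_distrib, Finset.sum_add_distrib, sub_eq_add_neg] <;> ring

set_option maxHeartbeats 1000000 in
theorem deltaE_eq (n : ℕ) (a b : Fin n) (f : SIdx n × SIdx n → ℂ) (p q : SIdx n) :
    DeltaE n a b f (p, q) =
      (if p = Sum.inl a then f (Sum.inl b, q) else 0) +
      (if p = Sum.inr a then f (Sum.inr b, q) else 0) +
      ((if q = Sum.inl a then f (p, Sum.inl b) else 0) +
      (if q = Sum.inr a then f (p, Sum.inr b) else 0)) := by
  simp [DeltaE, rho, eQ, Estd, Matrix.single, Matrix.of_apply, ite_and,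
    Fintype.sum_sum_type, par, Matrix.one_apply, mul_ite, ite_mul,
    Finset.sum_ite_eq, Finset.sum_ite_eq', Finset.sum_add_distrib, eq_comm]

set_option maxHeartbeats 1000000 in
theorem deltaF_eq (n : ℕ) (a b : Fin n) (f : SIdx n × SIdx n → ℂ) (p q : SIdx n) :
    DeltaF n a b f (p, q) =
      (if p = Sum.inr a then f (Sum.inl b, q) else 0) +
      (if p = Sum.inl a then f (Sum.inr b, q) else 0) +
      ((-1 : ℂ)) ^ par p *
      ((if q = Sum.inr a then f (p, Sum.inl b) else 0) +
      (if q = Sum.inl a then f (p, Sum.inr b) else 0)) := by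
  cases p <;>
  simp [DeltaF, rho, fQ, Estd, Matrix.single, Matrix.of_apply, ite_and,
    Fintype.sum_sum_type, par, Matrix.one_apply, mul_ite, ite_mul,
    Finset.sum_ite_eq, Finset.sum_ite_eq', Finset.sum_add_distrib, eq_comm] <;>
  split_ifs <;> ring

theorem superCasimir_invariant (n : ℕ) (a b : Fin n) :
    (∀ f : SIdx n × SIdx n → ℂ, DeltaE n a b (OmegaOp n f) = OmegaOp n (DeltaE n a b f)) ∧
    (∀ f : SIdx n × SIdx n → ℂ, DeltaF n a b (OmegaOp n f) = OmegaOp n (DeltaF n a b f)) := by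
  constructor <;> intro f <;> funext pq <;> obtain ⟨p, q⟩ := pq <;>
    simp only [omega_eq] <;> cases p <;> cases q <;>
    simp [Sop, deltaE_eq, deltaF_eq, par] <;> split_ifs <;> ring
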